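/- For real numbers u_1, …, u_N and any κ > 0: ∫_{-κ}^{κ} |Σ_n u_n e(nη)|² dη ≪ ∫_{-∞}^{∞} |κ Σ_{x < n ≤ x + 1/(2κ)} u_n|² dx, with an absolute implied constant. -/

import Mathlib

open Complex MeasureTheory

/-- e(u) = e^{2πiu}. -/
noncomputable def e (u : ℝ) : ℂ := Complex.exp (2 * Real.pi * Complex.I * u)

open Real FourierTransform intervalIntegral

/-! ### Auxiliary definitions: the triangle function and the Fejér-type kernel -/

noncomputable def gallagherTri (h t : ℝ) : ℝ := max 0 (h - |t|)

noncomputable def gallagherW (h η : ℝ) : ℝ :=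
  if η = 0 then h ^ 2 else Real.sin (Real.pi * h * η) ^ 2 / (Real.pi * η) ^ 2

namespace GallagherAux

notation "tri" => gallagherTri
notation "W" => gallagherW

lemma tri_continuous (h : ℝ) : Continuous (tri h) := by
  unfold gallagherTri; fun_prop

lemma tri_eq_zero {h t : ℝ} (ht : h ≤ |t|) : tri h t = 0 := by
  simp [gallagherTri, sub_nonpos.2 ht]

lemma W_nonneg (h η : ℝ) : 0 ≤ W h η := by
  unfold gallagherW; split <;> positivity

lemma W_measurable (h : ℝ) : Measurable (W h) := by
  unfold gallagherW
  exact Measurable.ite (measurableSet_singleton 0) measurable_const (by fun_prop)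

lemma W_le (h : ℝ) (hh : 0 < h) (η : ℝ) :
    W h η ≤ 2 * h ^ 2 * (1 + (Real.pi * h * η) ^ 2)⁻¹ := by
  unfold gallagherW
  split
  · rename_i h0
    subst h0
    simp
    nlinarith
  · rename_i h0
    have hx1 : Real.sin (Real.pi * h * η) ^ 2 ≤ 1 := Real.sin_sq_le_one _
    have hx2 : Real.sin (Real.pi * h * η) ^ 2 ≤ (Real.pi * h * η) ^ 2 := Real.sin_sq_le_sq
    have hp1 : (0:ℝ) < (Real.pi * η) ^ 2 := by positivity
    have hp2 : (0:ℝ) < 1 + (Real.pi * h * η) ^ 2 := by positivity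
    rw [div_le_iff₀ hp1]
    have key : Real.sin (Real.pi * h * η) ^ 2 * (1 + (Real.pi * h * η) ^ 2)
        ≤ 2 * h ^ 2 * (Real.pi * η) ^ 2 := by
      nlinarith [sq_nonneg (Real.pi * η), sq_nonneg h]
    calc Real.sin (Real.pi * h * η) ^ 2
        = Real.sin (Real.pi * h * η) ^ 2 * (1 + (Real.pi * h * η) ^ 2)
          * (1 + (Real.pi * h * η) ^ 2)⁻¹ := by field_simp
      _ ≤ 2 * h ^ 2 * (Real.pi * η) ^ 2 * (1 + (Real.pi * h * η) ^ 2)⁻¹ := by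
          apply mul_le_mul_of_nonneg_right key (by positivity)
      _ = 2 * h ^ 2 * (1 + (Real.pi * h * η) ^ 2)⁻¹ * (Real.pi * η) ^ 2 := by ring

lemma W_integrable {h : ℝ} (hh : 0 < h) : Integrable (W h) := by
  have hbase : Integrable (fun η : ℝ => (1 + η ^ 2)⁻¹) := integrable_inv_one_add_sq
  have hcomp : Integrable (fun η : ℝ => (1 + (Real.pi * h * η) ^ 2)⁻¹) := by
    have := hbase.comp_mul_left' (R := Real.pi * h) (by positivity)
    simpa using this
  refine (hcomp.const_mul (2 * h ^ 2)).mono' ((W_measurable h).aestronglyMeasurable) ?_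
  filter_upwards with η
  rw [Real.norm_of_nonneg (W_nonneg h η)]
  exact W_le h hh η

lemma integral_linear_mul_exp (α β c : ℂ) (hc : c ≠ 0) (a b : ℝ) :
    ∫ t in a..b, (α + β * t) * Complex.exp (c * t) =
      ((α + β * b) * Complex.exp (c * b) / c - β * Complex.exp (c * b) / c ^ 2)
      - ((α + β * a) * Complex.exp (c * a) / c - β * Complex.exp (c * a) / c ^ 2) := by
  have key : ∀ t : ℝ, HasDerivAt (fun s : ℝ => (α + β * s) * Complex.exp (c * s) / c
      - β * Complex.exp (c * s) / c ^ 2) ((α + β * t) * Complex.exp (c * t)) t := by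
    intro t
    have h1 : HasDerivAt (fun s : ℝ => (c * (s : ℂ))) c t := by
      simpa using (Complex.ofRealCLM.hasDerivAt (x := t)).const_mul c
    have h2 : HasDerivAt (fun s : ℝ => Complex.exp (c * s)) (Complex.exp (c * t) * c) t := by
      simpa [mul_comm] using h1.cexp
    have h3 : HasDerivAt (fun s : ℝ => (α + β * (s:ℂ))) β t := by
      simpa using ((Complex.ofRealCLM.hasDerivAt (x := t)).const_mul β).const_add α
    have h5 := (((h3.mul h2).div_const c).sub ((h2.const_mul β).div_const (c ^ 2)))
    convert h5 using 1
    · rfl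
    · rfl
    · field_simp
      ring
  rw [intervalIntegral.integral_eq_sub_of_hasDerivAt (fun t _ => key t)]
  apply Continuous.intervalIntegrable
  fun_prop

lemma fourier_tri (h : ℝ) (hh : 0 < h) (η : ℝ) :
    𝓕 (fun t : ℝ => (tri h t : ℂ)) η = (W h η : ℂ) := by
  rw [Real.fourier_real_eq_integral_exp_smul]
  have hπ : Real.pi ≠ 0 := Real.pi_ne_zero
  have hsupp : ∀ v : ℝ, v ∉ Set.Ioc (-h) h →
      Complex.exp (↑(-2 * Real.pi * v * η) * Complex.I) • (tri h v : ℂ) = 0 := by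
    intro v hv
    have : h ≤ |v| := by
      simp only [Set.mem_Ioc, not_and_or, not_lt, not_le] at hv
      rcases hv with hv | hv
      · rw [abs_of_nonpos (by linarith)]; linarith
      · rw [abs_of_pos (by linarith)]; linarith
    simp [tri_eq_zero this]
  rw [← intervalIntegral.integral_eq_integral_of_support_subset
      (a := -h) (b := h) (fun v hv => by by_contra hc; exact hv (hsupp v hc))]
  have hcont : Continuous (fun v : ℝ =>
      Complex.exp (↑(-2 * Real.pi * v * η) * Complex.I) • (tri h v : ℂ)) := by
    have := tri_continuous h
    fun_prop
  rw [← intervalIntegral.integral_add_adjacent_intervals (a := -h) (b := 0) (c := h)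
      (hcont.intervalIntegrable _ _) (hcont.intervalIntegrable _ _)]
  rcases eq_or_ne η 0 with rfl | hη
  · have hz : ∀ v : ℝ, Complex.exp (↑(-2 * Real.pi * v * (0:ℝ)) * Complex.I) • (tri h v : ℂ)
        = ((tri h v : ℝ) : ℂ) := by intro v; norm_num
    simp only [hz]
    rw [intervalIntegral.integral_ofReal, intervalIntegral.integral_ofReal]
    have e1 : (∫ v in (-h)..(0:ℝ), tri h v) = ∫ v in (-h)..(0:ℝ), (h + v) := by
      apply intervalIntegral.integral_congr
      intro v hv
      rw [Set.uIcc_of_le (by linarith)] at hv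
      rw [gallagherTri, abs_of_nonpos hv.2, max_eq_right (by linarith [hv.1])]; ring
    have e2 : (∫ v in (0:ℝ)..h, tri h v) = ∫ v in (0:ℝ)..h, (h - v) := by
      apply intervalIntegral.integral_congr
      intro v hv
      rw [Set.uIcc_of_le (by linarith)] at hv
      rw [gallagherTri, _root_.abs_of_nonneg hv.1, max_eq_right (by linarith [hv.2])]
    rw [e1, e2]
    rw [intervalIntegral.integral_add intervalIntegrable_const intervalIntegrable_id,
      intervalIntegral.integral_sub intervalIntegrable_const intervalIntegrable_id,
      intervalIntegral.integral_const, integral_id, intervalIntegral.integral_const,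
      integral_id]
    rw [gallagherW]
    simp only [if_pos rfl, smul_eq_mul]
    push_cast
    ring
  · set cc : ℂ := -((2 * Real.pi * η : ℝ) : ℂ) * Complex.I with hccdef
    have hcc : cc ≠ 0 := by
      simp only [hccdef, neg_mul, neg_ne_zero, mul_ne_zero_iff]
      exact ⟨by exact_mod_cast mul_ne_zero (mul_ne_zero two_ne_zero hπ) hη, Complex.I_ne_zero⟩
    have e1 : (∫ v in (-h)..(0:ℝ), Complex.exp (↑(-2 * Real.pi * v * η) * Complex.I) • (tri h v : ℂ))
        = ∫ v in (-h)..(0:ℝ), ((h : ℂ) + 1 * v) * Complex.exp (cc * v) := by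
      apply intervalIntegral.integral_congr
      intro v hv
      rw [Set.uIcc_of_le (by linarith)] at hv
      have htri : tri h v = h + v := by
        rw [gallagherTri, abs_of_nonpos hv.2, max_eq_right (by linarith [hv.1])]; ring
      show Complex.exp (↑(-2 * Real.pi * v * η) * Complex.I) • ((tri h v : ℝ) : ℂ) = _
      rw [htri]
      have : (↑(-2 * Real.pi * v * η) * Complex.I) = cc * v := by
        rw [hccdef]; push_cast; ring
      rw [this, smul_eq_mul]
      push_cast; ring
    have e2 : (∫ v in (0:ℝ)..h, Complex.exp (↑(-2 * Real.pi * v * η) * Complex.I) • (tri h v : ℂ))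
        = ∫ v in (0:ℝ)..h, ((h : ℂ) + (-1) * v) * Complex.exp (cc * v) := by
      apply intervalIntegral.integral_congr
      intro v hv
      rw [Set.uIcc_of_le (by linarith)] at hv
      have htri : tri h v = h - v := by
        rw [gallagherTri, _root_.abs_of_nonneg hv.1, max_eq_right (by linarith [hv.2])]
      show Complex.exp (↑(-2 * Real.pi * v * η) * Complex.I) • ((tri h v : ℝ) : ℂ) = _
      rw [htri]
      have : (↑(-2 * Real.pi * v * η) * Complex.I) = cc * v := by
        rw [hccdef]; push_cast; ring
      rw [this, smul_eq_mul]
      push_cast; ring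
    rw [e1, e2, integral_linear_mul_exp _ _ _ hcc, integral_linear_mul_exp _ _ _ hcc]
    have hx1 : cc * -(h : ℂ) = ((2 * Real.pi * η * h : ℝ) : ℂ) * Complex.I := by
      rw [hccdef]; push_cast; ring
    have hx2 : cc * (h : ℂ) = ((-(2 * Real.pi * η * h) : ℝ) : ℂ) * Complex.I := by
      rw [hccdef]; push_cast; ring
    have hexp1 : Complex.exp (cc * -(h : ℂ))
        = Complex.cos ((2 * Real.pi * η * h : ℝ) : ℂ)
          + Complex.sin ((2 * Real.pi * η * h : ℝ) : ℂ) * Complex.I := by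
      rw [hx1, Complex.exp_mul_I]
    have hexp2 : Complex.exp (cc * (h : ℂ))
        = Complex.cos ((2 * Real.pi * η * h : ℝ) : ℂ)
          - Complex.sin ((2 * Real.pi * η * h : ℝ) : ℂ) * Complex.I := by
      rw [hx2, Complex.exp_mul_I]
      push_cast
      rw [Complex.cos_neg, Complex.sin_neg]
      ring
    have hcos : Complex.cos ((2 * Real.pi * η * h : ℝ) : ℂ)
        = 1 - 2 * ((Real.sin (Real.pi * h * η) : ℝ) : ℂ) ^ 2 := by
      have : Real.cos (2 * Real.pi * η * h) = 1 - 2 * Real.sin (Real.pi * h * η) ^ 2 := by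
        rw [show 2 * Real.pi * η * h = 2 * (Real.pi * h * η) by ring, Real.cos_two_mul]
        nlinarith [Real.sin_sq_add_cos_sq (Real.pi * h * η)]
      rw [← Complex.ofReal_cos, this]
      push_cast; ring
    rw [gallagherW, if_neg hη]
    push_cast
    have hcc2 : cc ^ 2 = -((2 * Real.pi * η : ℝ) : ℂ) ^ 2 := by
      rw [hccdef]; ring_nf; rw [Complex.I_sq]; ring
    have hη' : (η : ℂ) ≠ 0 := by exact_mod_cast hη
    have hπ' : (Real.pi : ℂ) ≠ 0 := by exact_mod_cast hπ
    trans (Complex.exp (cc * -(h : ℂ)) + Complex.exp (cc * (h : ℂ)) - 2) / cc ^ 2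
    · simp only [mul_zero, Complex.exp_zero]
      field_simp
      ring
    rw [hexp1, hexp2, hcos, hcc2, Complex.ofReal_sin]
    push_cast
    field_simp
    ring

lemma key_inversion {h : ℝ} (hh : 0 < h) (k : ℝ) :
    ∫ η : ℝ, (W h η : ℂ) * e (k * η) = (tri h k : ℂ) := by
  have htri_int : Integrable (fun t : ℝ => (tri h t : ℂ)) := by
    apply Continuous.integrable_of_hasCompactSupport
    · exact Complex.continuous_ofReal.comp (tri_continuous h)
    · apply HasCompactSupport.intro (isCompact_Icc (a := -h) (b := h))
      intro x hx
      have : h ≤ |x| := by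
        simp only [Set.mem_Icc, not_and_or, not_le] at hx
        rcases hx with hx | hx
        · rw [abs_of_nonpos (by linarith)]; linarith
        · rw [abs_of_pos (by linarith)]; linarith
      simp [tri_eq_zero this]
  have hft : 𝓕 (fun t : ℝ => (tri h t : ℂ)) = fun η : ℝ => (W h η : ℂ) :=
    funext (fourier_tri h hh)
  have hft_int : Integrable (𝓕 (fun t : ℝ => (tri h t : ℂ))) := by
    rw [hft]; exact (W_integrable hh).ofReal
  have hinv := htri_int.fourierInv_fourier_eq hft_int
    ((Complex.continuous_ofReal.comp (tri_continuous h)).continuousAt (x := k))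
  rw [hft] at hinv
  rw [Real.fourierInv_eq'] at hinv
  rw [← hinv]
  apply MeasureTheory.integral_congr_ae
  filter_upwards with v
  rw [smul_eq_mul, e]
  have hi : (inner ℝ v k : ℝ) = v * k := by simp [RCLike.inner_apply, mul_comm]
  rw [hi]
  rw [show ((2 * Real.pi * (v * k) : ℝ) : ℂ) * Complex.I
      = 2 * (Real.pi : ℂ) * Complex.I * ((k * v : ℝ) : ℂ) by push_cast; ring]
  ring

lemma e_abs (a : ℝ) : ‖e a‖ = 1 := by
  rw [e, Complex.norm_exp]
  norm_num [Complex.mul_re]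

lemma e_mul (a b : ℝ) : e a * e b = e (a + b) := by
  rw [e, e, e, ← Complex.exp_add]
  congr 1
  push_cast
  ring

lemma e_conj (a : ℝ) : (starRingEnd ℂ) (e a) = e (-a) := by
  rw [e, e, ← Complex.exp_conj]
  apply congrArg
  simp only [map_mul, Complex.conj_I, Complex.conj_ofReal, map_ofNat]
  push_cast
  ring

lemma e_continuous : Continuous e := by
  unfold e; fun_prop

lemma term_integrable {h : ℝ} (hh : 0 < h) (c : ℝ) (k : ℝ) :
    Integrable (fun η : ℝ => (c : ℂ) * ((W h η : ℂ) * e (k * η))) := by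
  apply Integrable.const_mul
  have : Integrable (fun η : ℝ => |1| * W h η) := by
    simpa using W_integrable hh
  apply this.mono'
  · apply AEStronglyMeasurable.mul
    · exact (Complex.measurable_ofReal.comp (W_measurable h)).aestronglyMeasurable
    · exact (e_continuous.comp (by fun_prop)).aestronglyMeasurable
  · filter_upwards with η
    rw [norm_mul, Complex.norm_real, e_abs]
    simp [Real.norm_of_nonneg (W_nonneg h η), _root_.abs_of_nonneg (W_nonneg h η)]

lemma eta_side {h : ℝ} (hh : 0 < h) (M : Finset ℕ) (u : ℕ → ℝ) :
    ∫ η : ℝ, W h η * (‖∑ n ∈ M, (u n : ℂ) * e (n * η)‖) ^ 2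
      = ∑ m ∈ M, ∑ n ∈ M, u m * u n * tri h ((m : ℝ) - n) := by
  set F : ℝ → ℂ := fun η => ∑ n ∈ M, (u n : ℂ) * e (n * η) with hF
  have hpt : ∀ η : ℝ, W h η * (‖F η‖) ^ 2
      = (∑ m ∈ M, ∑ n ∈ M, ((u m : ℂ) * u n) * ((W h η : ℂ) * e (((m : ℝ) - n) * η))).re := by
    intro η
    have hFF : F η * (starRingEnd ℂ) (F η)
        = ∑ m ∈ M, ∑ n ∈ M, ((u m : ℂ) * u n) * e (((m : ℝ) - n) * η) := by
      rw [hF]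
      rw [map_sum, Finset.sum_mul_sum]
      apply Finset.sum_congr rfl; intro m _
      apply Finset.sum_congr rfl; intro n _
      rw [map_mul, e_conj, Complex.conj_ofReal]
      rw [show (u m : ℂ) * e (m * η) * ((u n : ℂ) * e (-(n * η)))
          = ((u m : ℂ) * u n) * (e (m * η) * e (-(n * η))) by ring, e_mul]
      congr 2
      ring
    have h1 : ((W h η : ℂ) * (F η * (starRingEnd ℂ) (F η))).re
        = W h η * (‖F η‖) ^ 2 := by
      rw [Complex.mul_conj, Complex.sq_norm]
      rw [show ((W h η : ℂ) * (Complex.normSq (F η) : ℂ))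
          = ((W h η * Complex.normSq (F η) : ℝ) : ℂ) by push_cast; ring]
      rw [Complex.ofReal_re]
    rw [← h1, hFF, Finset.mul_sum]
    congr 1
    apply Finset.sum_congr rfl; intro m _
    rw [Finset.mul_sum]
    apply Finset.sum_congr rfl; intro n _
    ring
  simp only [hF] at hpt
  simp only [hpt]
  have hterm : ∀ m n : ℕ, Integrable (fun η : ℝ =>
      ((u m : ℂ) * u n) * ((W h η : ℂ) * e (((m : ℝ) - n) * η))) := by
    intro m n
    have := term_integrable hh (u m * u n) ((m : ℝ) - n)
    simpa [Complex.ofReal_mul] using this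
  have hIall : Integrable (fun η : ℝ =>
      ∑ m ∈ M, ∑ n ∈ M, ((u m : ℂ) * u n) * ((W h η : ℂ) * e (((m : ℝ) - n) * η))) :=
    integrable_finset_sum _ (fun m _ => integrable_finset_sum _ (fun n _ => hterm m n))
  have hre := integral_re (𝕜 := ℂ) hIall
  simp only [RCLike.re_to_complex] at hre
  rw [hre]
  rw [integral_finset_sum _ (fun m _ => integrable_finset_sum _ (fun n _ => hterm m n))]
  rw [Complex.re_sum]
  apply Finset.sum_congr rfl; intro m _
  rw [integral_finset_sum _ (fun n _ => hterm m n), Complex.re_sum]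
  apply Finset.sum_congr rfl; intro n _
  rw [MeasureTheory.integral_const_mul, key_inversion hh]
  rw [show ((u m : ℂ) * u n * (tri h ((m : ℝ) - n) : ℂ))
      = ((u m * u n * tri h ((m : ℝ) - n) : ℝ) : ℂ) by push_cast; ring]
  rw [Complex.ofReal_re]

lemma ind_integrable (s : Set ℝ) (hs : MeasurableSet s) (hfin : volume s < ⊤) :
    Integrable (s.indicator (1 : ℝ → ℝ)) := by
  rw [integrable_indicator_iff hs]
  exact integrableOn_const hfin.ne

lemma ind_mul_integral (h a b : ℝ) (hh : 0 < h) :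
    ∫ x : ℝ, (Set.Ico (a - h) a).indicator (1 : ℝ → ℝ) x
      * (Set.Ico (b - h) b).indicator (1 : ℝ → ℝ) x = tri h (a - b) := by
  have : ∀ x : ℝ, (Set.Ico (a - h) a).indicator (1 : ℝ → ℝ) x
      * (Set.Ico (b - h) b).indicator (1 : ℝ → ℝ) x
      = (Set.Ico (a - h) a ∩ Set.Ico (b - h) b).indicator (1 : ℝ → ℝ) x := by
    intro x; rw [Set.inter_indicator_one]; rfl
  simp only [this]
  rw [integral_indicator_one (measurableSet_Ico.inter measurableSet_Ico)]
  rw [Set.Ico_inter_Ico, Real.volume_real_Ico]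
  rw [gallagherTri]
  have hkey : a ⊓ b - (a - h) ⊔ (b - h) = h - |a - b| := by
    rcases le_total a b with hab | hab
    · rw [abs_of_nonpos (sub_nonpos.2 hab), min_eq_left hab,
        max_eq_right (by linarith : a - h ≤ b - h)]
      ring
    · rw [_root_.abs_of_nonneg (sub_nonneg.2 hab), min_eq_right hab,
        max_eq_left (by linarith : b - h ≤ a - h)]
      ring
  rw [hkey, max_comm]

lemma xside (h : ℝ) (hh : 0 < h) (M : Finset ℕ) (u : ℕ → ℝ) :
    ∫ x : ℝ, (∑ n ∈ M, u n * (Set.Ico ((n : ℝ) - h) n).indicator (1 : ℝ → ℝ) x) ^ 2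
      = ∑ m ∈ M, ∑ n ∈ M, u m * u n * tri h ((m : ℝ) - n) := by
  have hpt : ∀ x : ℝ, (∑ n ∈ M, u n * (Set.Ico ((n : ℝ) - h) n).indicator (1 : ℝ → ℝ) x) ^ 2
      = ∑ m ∈ M, ∑ n ∈ M, u m * u n *
        ((Set.Ico ((m : ℝ) - h) m).indicator (1 : ℝ → ℝ) x
          * (Set.Ico ((n : ℝ) - h) n).indicator (1 : ℝ → ℝ) x) := by
    intro x
    rw [sq, Finset.sum_mul_sum]
    apply Finset.sum_congr rfl; intro m _
    apply Finset.sum_congr rfl; intro n _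
    ring
  simp only [hpt]
  have hint : ∀ m n : ℕ, Integrable (fun x : ℝ => u m * u n *
      ((Set.Ico ((m : ℝ) - h) m).indicator (1 : ℝ → ℝ) x
        * (Set.Ico ((n : ℝ) - h) n).indicator (1 : ℝ → ℝ) x)) := by
    intro m n
    have : Integrable ((Set.Ico ((m : ℝ) - h) m ∩ Set.Ico ((n : ℝ) - h) n).indicator
        (1 : ℝ → ℝ)) := by
      apply ind_integrable _ (measurableSet_Ico.inter measurableSet_Ico)
      exact lt_of_le_of_lt (measure_mono Set.inter_subset_left)
        (by rw [Real.volume_Ico]; exact ENNReal.ofReal_lt_top)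
    apply Integrable.const_mul
    apply this.congr
    filter_upwards with x
    rw [Set.inter_indicator_one]; rfl
  rw [integral_finset_sum _ (fun m _ => integrable_finset_sum _ (fun n _ => hint m n))]
  apply Finset.sum_congr rfl; intro m _
  rw [integral_finset_sum _ (fun n _ => hint m n)]
  apply Finset.sum_congr rfl; intro n _
  rw [MeasureTheory.integral_const_mul, ind_mul_integral h _ _ hh]

end GallagherAux

namespace GallagherAux

lemma F_cont (M : Finset ℕ) (u : ℕ → ℝ) :
    Continuous (fun η : ℝ => ∑ n ∈ M, (u n : ℂ) * e (n * η)) := by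
  apply continuous_finset_sum
  intro n _
  exact continuous_const.mul (e_continuous.comp (by fun_prop))

lemma F_bound (M : Finset ℕ) (u : ℕ → ℝ) (η : ℝ) :
    ‖∑ n ∈ M, (u n : ℂ) * e (n * η)‖ ≤ ∑ n ∈ M, |u n| := by
  refine le_trans (norm_sum_le _ _) ?_
  apply Finset.sum_le_sum
  intro n _
  rw [norm_mul, Complex.norm_real, Real.norm_eq_abs, e_abs, mul_one]

lemma G_integrable {h : ℝ} (hh : 0 < h) (M : Finset ℕ) (u : ℕ → ℝ) :
    Integrable (fun η : ℝ =>
      W h η * (‖∑ n ∈ M, (u n : ℂ) * e (n * η)‖) ^ 2) := by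
  refine ((W_integrable hh).const_mul ((∑ n ∈ M, |u n|) ^ 2)).mono'
    ((W_measurable h).aestronglyMeasurable.mul
      (((continuous_norm.comp (F_cont M u)).pow 2).aestronglyMeasurable)) ?_
  filter_upwards with η
  have h1 := F_bound M u η
  have h2 : (0:ℝ) ≤ ‖∑ n ∈ M, (u n : ℂ) * e (n * η)‖ := norm_nonneg _
  rw [Real.norm_of_nonneg (mul_nonneg (W_nonneg h η) (by positivity))]
  have h3 : (‖∑ n ∈ M, (u n : ℂ) * e (n * η)‖) ^ 2 ≤ (∑ n ∈ M, |u n|) ^ 2 :=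
    pow_le_pow_left₀ h2 h1 2
  nlinarith [W_nonneg h η]

end GallagherAux

open GallagherAux

/-- Gallagher's lemma: for real u_1,…,u_N and κ > 0,
∫_{-κ}^{κ} |Σ_n u_n e(nη)|² dη ≪ ∫_{-∞}^{∞} |κ Σ_{x<n≤x+1/(2κ)} u_n|² dx,
with an absolute implied constant. -/
theorem gallagher_lemma :
    ∃ C : ℝ, ∀ (N : ℕ) (u : ℕ → ℝ) (κ : ℝ), 0 < κ →
      (∫ η in (-κ)..κ,
          (‖∑ n ∈ Finset.range (N + 1), (u n : ℂ) * e (n * η)‖) ^ 2) ≤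
        C * ∫ x : ℝ,
          (κ * ∑ n ∈ (Finset.range (N + 1)).filter
              (fun n : ℕ => x < (n : ℝ) ∧ (n : ℝ) ≤ x + 1 / (2 * κ)), u n) ^ 2 := by
  refine ⟨Real.pi ^ 2, ?_⟩
  intro N u κ hκ
  set h : ℝ := 1 / (2 * κ) with hhdef
  have hh : 0 < h := by rw [hhdef]; positivity
  have hhk : h * κ = 1 / 2 := by rw [hhdef]; field_simp
  set M : Finset ℕ := Finset.range (N + 1) with hM
  have hπ : (0:ℝ) < Real.pi := Real.pi_pos
  -- pointwise lower bound for W on [-κ, κ]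
  have hWlow : ∀ η ∈ Set.Icc (-κ) κ, 1 ≤ Real.pi ^ 2 * κ ^ 2 * W h η := by
    intro η hη
    have hηa : |η| ≤ κ := abs_le.2 ⟨hη.1, hη.2⟩
    rcases eq_or_ne η 0 with rfl | hη0
    · have : W h 0 = h ^ 2 := by simp [gallagherW]
      rw [this]
      have hκh2 : κ ^ 2 * h ^ 2 = 1 / 4 := by nlinarith [hhk]
      nlinarith [Real.pi_gt_three, hκh2]
    · have hW : W h η = Real.sin (Real.pi * h * η) ^ 2 / (Real.pi * η) ^ 2 := by
        simp [gallagherW, hη0]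
      have hx : Real.pi * h * |η| ≤ Real.pi / 2 := by
        have : h * |η| ≤ 1 / 2 := by
          calc h * |η| ≤ h * κ := by
                exact mul_le_mul_of_nonneg_left hηa hh.le
            _ = 1 / 2 := hhk
        nlinarith
      have hsin : 2 * h * |η| ≤ Real.sin (Real.pi * h * |η|) := by
        have := Real.mul_le_sin (x := Real.pi * h * |η|) (by positivity) hx
        calc 2 * h * |η| = 2 / Real.pi * (Real.pi * h * |η|) := by
              field_simp
          _ ≤ Real.sin (Real.pi * h * |η|) := this
      have habs : Real.sin (Real.pi * h * η) ^ 2 = Real.sin (Real.pi * h * |η|) ^ 2 := by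
        rcases abs_cases η with ⟨he, _⟩ | ⟨he, _⟩
        · rw [he]
        · rw [he, show Real.pi * h * -η = -(Real.pi * h * η) by ring, Real.sin_neg]
          ring
      have h4 : 4 * h ^ 2 * η ^ 2 ≤ Real.sin (Real.pi * h * η) ^ 2 := by
        rw [habs]
        calc 4 * h ^ 2 * η ^ 2 = (2 * h * |η|) ^ 2 := by
              rw [mul_pow, mul_pow, _root_.sq_abs]; ring
          _ ≤ Real.sin (Real.pi * h * |η|) ^ 2 :=
              pow_le_pow_left₀ (by positivity) hsin 2
      rw [hW, ← mul_div_assoc, le_div_iff₀ (by positivity)]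
      have hκh2 : κ ^ 2 * h ^ 2 = 1 / 4 := by nlinarith [hhk]
      nlinarith [mul_le_mul_of_nonneg_left h4
        (by positivity : (0:ℝ) ≤ Real.pi ^ 2 * κ ^ 2), sq_nonneg η]
  -- step 1: compare on the interval
  have step1 : (∫ η in (-κ)..κ, (‖∑ n ∈ M, (u n : ℂ) * e (n * η)‖) ^ 2)
      ≤ ∫ η in (-κ)..κ, Real.pi ^ 2 * κ ^ 2 *
          (W h η * (‖∑ n ∈ M, (u n : ℂ) * e (n * η)‖) ^ 2) := by
    apply intervalIntegral.integral_mono_on (by linarith)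
    · exact ((continuous_norm.comp (F_cont M u)).pow 2).intervalIntegrable _ _
    · exact ((G_integrable hh M u).const_mul _).intervalIntegrable
    · intro x hx
      nlinarith [hWlow x hx, sq_nonneg (‖∑ n ∈ M, (u n : ℂ) * e (n * x)‖)]
  -- step 2: extend to all of ℝ
  have step2 : (∫ η in (-κ)..κ, Real.pi ^ 2 * κ ^ 2 *
        (W h η * (‖∑ n ∈ M, (u n : ℂ) * e (n * η)‖) ^ 2))
      ≤ Real.pi ^ 2 * κ ^ 2 *
        ∫ η : ℝ, W h η * (‖∑ n ∈ M, (u n : ℂ) * e (n * η)‖) ^ 2 := by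
    rw [intervalIntegral.integral_const_mul]
    apply mul_le_mul_of_nonneg_left _ (by positivity)
    rw [intervalIntegral.integral_of_le (by linarith)]
    apply setIntegral_le_integral (G_integrable hh M u)
    filter_upwards with η
    exact mul_nonneg (W_nonneg h η) (by positivity)
  -- the right-hand side
  have hRHS : (∫ x : ℝ, (κ * ∑ n ∈ M.filter
        (fun n : ℕ => x < (n : ℝ) ∧ (n : ℝ) ≤ x + h), u n) ^ 2)
      = κ ^ 2 * ∑ m ∈ M, ∑ n ∈ M, u m * u n * tri h ((m : ℝ) - n) := by
    have hpt : ∀ x : ℝ, (κ * ∑ n ∈ M.filter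
          (fun n : ℕ => x < (n : ℝ) ∧ (n : ℝ) ≤ x + h), u n) ^ 2
        = κ ^ 2 * (∑ n ∈ M, u n * (Set.Ico ((n : ℝ) - h) n).indicator (1 : ℝ → ℝ) x) ^ 2 := by
      intro x
      have hsum : (∑ n ∈ M.filter (fun n : ℕ => x < (n : ℝ) ∧ (n : ℝ) ≤ x + h), u n)
          = ∑ n ∈ M, u n * (Set.Ico ((n : ℝ) - h) n).indicator (1 : ℝ → ℝ) x := by
        rw [Finset.sum_filter]
        apply Finset.sum_congr rfl
        intro n _
        rw [Set.indicator_apply]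
        have hiff : (x < (n : ℝ) ∧ (n : ℝ) ≤ x + h) ↔ x ∈ Set.Ico ((n : ℝ) - h) (n : ℝ) := by
          rw [Set.mem_Ico]
          constructor
          · rintro ⟨h1, h2⟩; exact ⟨by linarith, h1⟩
          · rintro ⟨h1, h2⟩; exact ⟨h2, by linarith⟩
        split_ifs with hc1 hc2 hc2
        · simp
        · exact absurd (hiff.1 hc1) hc2
        · exact absurd (hiff.2 hc2) hc1
        · simp
      rw [hsum]; ring
    simp only [hpt]
    rw [MeasureTheory.integral_const_mul, xside h hh M u]
  calc (∫ η in (-κ)..κ, (‖∑ n ∈ M, (u n : ℂ) * e (n * η)‖) ^ 2)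
      ≤ ∫ η in (-κ)..κ, Real.pi ^ 2 * κ ^ 2 *
          (W h η * (‖∑ n ∈ M, (u n : ℂ) * e (n * η)‖) ^ 2) := step1
    _ ≤ Real.pi ^ 2 * κ ^ 2 *
          ∫ η : ℝ, W h η * (‖∑ n ∈ M, (u n : ℂ) * e (n * η)‖) ^ 2 := step2
    _ = Real.pi ^ 2 * κ ^ 2 *
          ∑ m ∈ M, ∑ n ∈ M, u m * u n * tri h ((m : ℝ) - n) := by
          rw [eta_side hh M u]
    _ = Real.pi ^ 2 * (κ ^ 2 *
          ∑ m ∈ M, ∑ n ∈ M, u m * u n * tri h ((m : ℝ) - n)) := by ring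
    _ = Real.pi ^ 2 * ∫ x : ℝ, (κ * ∑ n ∈ M.filter
          (fun n : ℕ => x < (n : ℝ) ∧ (n : ℝ) ≤ x + h), u n) ^ 2 := by rw [hRHS]
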